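/- Let X be a topological space and H : X × [0,1] → ℝ^m continuous such that for every t ∈ [0,1] the map H(·,t) is injective. Then there is a continuous map G : X̃ × [0,1] → S^{m−1} (where X̃ = {(x,y) : x ≠ y} and S^{m−1} is the unit sphere of ℝ^m) such that G((x,y),0) and G((x,y),1) are the Gauss maps of H(·,0) and H(·,1) respectively, and G((y,x),t) = −G((x,y),t) for all x ≠ y and t. In particular, the Gauss maps of the two ends of the isotopy are equivariantly homotopic. -/

import Mathlib

/-- If `H` is a continuous homotopy all of whose time slices are injective, then the
Gauss maps of the two ends are connected by a continuous equivariant sphere-valued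
homotopy on the deleted product. -/
theorem stmt1 {X : Type*} [TopologicalSpace X] (m : ℕ) (hm : 1 ≤ m)
    (H : X × unitInterval → EuclideanSpace ℝ (Fin m)) (hH : Continuous H)
    (hinj : ∀ t : unitInterval, Function.Injective (fun x => H (x, t))) :
    ∃ G : {p : X × X // p.1 ≠ p.2} × unitInterval → EuclideanSpace ℝ (Fin m),
      Continuous G ∧
      (∀ p t, ‖G (p, t)‖ = 1) ∧
      (∀ p : {p : X × X // p.1 ≠ p.2},
        G (p, 0) = ‖H (p.1.1, 0) - H (p.1.2, 0)‖⁻¹ • (H (p.1.1, 0) - H (p.1.2, 0)) ∧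
        G (p, 1) = ‖H (p.1.1, 1) - H (p.1.2, 1)‖⁻¹ • (H (p.1.1, 1) - H (p.1.2, 1))) ∧
      (∀ (x y : X) (h : x ≠ y) (t : unitInterval),
        G (⟨(y, x), Ne.symm h⟩, t) = - G (⟨(x, y), h⟩, t)) := by
  set d : {p : X × X // p.1 ≠ p.2} × unitInterval → EuclideanSpace ℝ (Fin m) :=
    fun q => H (q.1.1.1, q.2) - H (q.1.1.2, q.2) with hd
  have hdcont : Continuous d := by
    have c0 : Continuous fun q : {p : X × X // p.1 ≠ p.2} × unitInterval => q.1.1 :=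
      continuous_subtype_val.comp continuous_fst
    exact (hH.comp (c0.fst.prodMk continuous_snd)).sub
      (hH.comp (c0.snd.prodMk continuous_snd))
  have hdne : ∀ q, d q ≠ 0 := by
    intro q hq
    apply q.1.2
    exact hinj q.2 (by simpa [hd, sub_eq_zero] using hq)
  refine ⟨fun q => ‖d q‖⁻¹ • d q, ?_, ?_, ?_, ?_⟩
  · apply Continuous.smul (f := fun q => ‖d q‖⁻¹) _ hdcont
    exact (hdcont.norm).inv₀ (fun q => norm_ne_zero_iff.mpr (hdne q))
  · intro p t
    rw [norm_smul, norm_inv, norm_norm,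
      inv_mul_cancel₀ (norm_ne_zero_iff.mpr (hdne (p, t)))]
  · intro p; exact ⟨rfl, rfl⟩
  · intro x y h t
    have : d (⟨(y, x), Ne.symm h⟩, t) = - d (⟨(x, y), h⟩, t) := by
      simp [hd, neg_sub]
    simp only []
    rw [this, norm_neg, smul_neg]
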